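/- arXiv:1605.09570 — 3 statements merged into one kernel-verified Lean document; each statement's English description precedes it below -/
import Mathlib

section
/- Let a ≤ b be real numbers, V, L ≥ 0, and let X : [a,b] → ℝ³ be differentiable. Suppose there are functions w, l, r : [a,b] → ℝ³ with |w(s)| ≤ V and |l(s)| ≤ L for all s ∈ [a,b], such that X'(s) = w(s) − l(s) − r(s) × X(s) for all s ∈ [a,b]. Then for all s, t ∈ [a,b], | |X(s)| − |X(t)| | ≤ (V + L)·|s − t|. -/
/-- The cross product on `ℝ³`, viewed as Euclidean space. -/
noncomputable def cross3 (a b : EuclideanSpace ℝ (Fin 3)) : EuclideanSpace ℝ (Fin 3) :=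
  (WithLp.equiv 2 (Fin 3 → ℝ)).symm
    (crossProduct (WithLp.equiv 2 (Fin 3 → ℝ) a) (WithLp.equiv 2 (Fin 3 → ℝ) b))

lemma inner_cross3_self (v x : EuclideanSpace ℝ (Fin 3)) :
    (inner ℝ x (cross3 v x) : ℝ) = 0 := by
  have h := dot_cross_self ((WithLp.equiv 2 (Fin 3 → ℝ)) v) ((WithLp.equiv 2 (Fin 3 → ℝ)) x)
  simpa [PiLp.inner_apply, cross3, dotProduct, RCLike.inner_apply, mul_comm] using h

/-- If `X' (s) = w(s) - l(s) - r(s) × X(s)` on `[a,b]` with `‖w‖ ≤ V` and `‖l‖ ≤ L`,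
then `| ‖X(s)‖ - ‖X(t)‖ | ≤ (V + L) |s - t|` for `s, t ∈ [a,b]`. -/
theorem norm_flow_lipschitz
    (a b V L : ℝ) (hab : a ≤ b) (hV : 0 ≤ V) (hL : 0 ≤ L)
    (X w l r : ℝ → EuclideanSpace ℝ (Fin 3))
    (hw : ∀ s ∈ Set.Icc a b, ‖w s‖ ≤ V)
    (hl : ∀ s ∈ Set.Icc a b, ‖l s‖ ≤ L)
    (hX : ∀ s ∈ Set.Icc a b,
      HasDerivWithinAt X (w s - l s - cross3 (r s) (X s)) (Set.Icc a b) s) :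
    ∀ s ∈ Set.Icc a b, ∀ t ∈ Set.Icc a b, |‖X s‖ - ‖X t‖| ≤ (V + L) * |s - t| := by
  intro s hs t ht
  have key : ∀ ε : ℝ, 0 < ε →
      |‖X s‖ - ‖X t‖| ≤ (V + L) * |s - t| + 2 * Real.sqrt ε := by
    intro ε hε
    set g : ℝ → ℝ := fun u => Real.sqrt (‖X u‖ ^ 2 + ε) with hg
    have hpos : ∀ u, (0:ℝ) < ‖X u‖ ^ 2 + ε := fun u => by positivity
    -- derivative of g
    have hderiv : ∀ u ∈ Set.Icc a b,
        HasDerivWithinAt g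
          ((inner ℝ (X u) (w u - l u) + inner ℝ (X u) (w u - l u) : ℝ) /
            (2 * Real.sqrt (‖X u‖ ^ 2 + ε))) (Set.Icc a b) u := by
      intro u hu
      have h1 : HasDerivWithinAt (fun v => (inner ℝ (X v) (X v) : ℝ) + ε)
          ((inner ℝ (X u) (w u - l u - cross3 (r u) (X u)) : ℝ)
            + inner ℝ (w u - l u - cross3 (r u) (X u)) (X u)) (Set.Icc a b) u :=
        ((hX u hu).inner ℝ (hX u hu)).add_const ε
      have hcross : (inner ℝ (X u) (w u - l u - cross3 (r u) (X u)) : ℝ)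
          = inner ℝ (X u) (w u - l u) := by
        rw [inner_sub_right, inner_cross3_self, sub_zero]
      have h2 : ((inner ℝ (X u) (w u - l u - cross3 (r u) (X u)) : ℝ)
            + inner ℝ (w u - l u - cross3 (r u) (X u)) (X u))
          = (inner ℝ (X u) (w u - l u) + inner ℝ (X u) (w u - l u) : ℝ) := by
        have hcross2 : (inner ℝ (w u - l u - cross3 (r u) (X u)) (X u) : ℝ)
            = inner ℝ (X u) (w u - l u) := by rw [real_inner_comm, hcross]
        rw [hcross, hcross2]
      rw [h2] at h1
      have h3 : HasDerivWithinAt (fun v => ‖X v‖ ^ 2 + ε)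
          ((inner ℝ (X u) (w u - l u) + inner ℝ (X u) (w u - l u) : ℝ)) (Set.Icc a b) u := by
        convert h1 using 2 with v
        rw [real_inner_self_eq_norm_sq]
      have h4 := h3.sqrt (ne_of_gt (hpos u))
      exact h4
    -- bound on the derivative
    have hbound : ∀ u ∈ Set.Icc a b,
        ‖(inner ℝ (X u) (w u - l u) + inner ℝ (X u) (w u - l u) : ℝ) /
            (2 * Real.sqrt (‖X u‖ ^ 2 + ε))‖ ≤ V + L := by
      intro u hu
      have hsq : 0 < Real.sqrt (‖X u‖ ^ 2 + ε) := Real.sqrt_pos.mpr (hpos u)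
      have hXle : ‖X u‖ ≤ Real.sqrt (‖X u‖ ^ 2 + ε) := by
        have h := Real.sqrt_le_sqrt (show ‖X u‖ ^ 2 ≤ ‖X u‖ ^ 2 + ε by linarith)
        rwa [Real.sqrt_sq (norm_nonneg _)] at h
      have hin : |(inner ℝ (X u) (w u - l u) : ℝ)| ≤ ‖X u‖ * (V + L) := by
        calc |(inner ℝ (X u) (w u - l u) : ℝ)| ≤ ‖X u‖ * ‖w u - l u‖ := abs_real_inner_le_norm _ _
          _ ≤ ‖X u‖ * (V + L) := by
              apply mul_le_mul_of_nonneg_left _ (norm_nonneg _)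
              calc ‖w u - l u‖ ≤ ‖w u‖ + ‖l u‖ := norm_sub_le _ _
                _ ≤ V + L := add_le_add (hw u hu) (hl u hu)
      rw [Real.norm_eq_abs, abs_div]
      rw [div_le_iff₀ (by positivity)]
      have habs2 : |2 * Real.sqrt (‖X u‖ ^ 2 + ε)| = 2 * Real.sqrt (‖X u‖ ^ 2 + ε) := by
        rw [abs_of_pos]; positivity
      rw [habs2]
      have h5 : |(inner ℝ (X u) (w u - l u) + inner ℝ (X u) (w u - l u) : ℝ)|
          ≤ 2 * (‖X u‖ * (V + L)) := by
        calc |(inner ℝ (X u) (w u - l u) + inner ℝ (X u) (w u - l u) : ℝ)|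
            ≤ |(inner ℝ (X u) (w u - l u) : ℝ)| + |(inner ℝ (X u) (w u - l u) : ℝ)| := abs_add_le _ _
          _ ≤ 2 * (‖X u‖ * (V + L)) := by linarith
      have h6 : ‖X u‖ * (V + L) ≤ Real.sqrt (‖X u‖ ^ 2 + ε) * (V + L) :=
        mul_le_mul_of_nonneg_right hXle (by linarith)
      nlinarith
    -- Lipschitz bound for g
    have hlip := (convex_Icc a b).norm_image_sub_le_of_norm_hasDerivWithin_le
      hderiv hbound ht hs
    rw [Real.norm_eq_abs, Real.norm_eq_abs] at hlip
    -- g is close to ‖X ·‖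
    have hclose : ∀ u, |‖X u‖ - g u| ≤ Real.sqrt ε := by
      intro u
      have h1 : ‖X u‖ ≤ g u := by
        have h := Real.sqrt_le_sqrt (show ‖X u‖ ^ 2 ≤ ‖X u‖ ^ 2 + ε by linarith)
        rwa [Real.sqrt_sq (norm_nonneg _)] at h
      have h2 : g u ≤ ‖X u‖ + Real.sqrt ε := by
        rw [hg]
        have : ‖X u‖ ^ 2 + ε ≤ (‖X u‖ + Real.sqrt ε) ^ 2 := by
          have hse : Real.sqrt ε ^ 2 = ε := Real.sq_sqrt hε.le
          nlinarith [norm_nonneg (X u), Real.sqrt_nonneg ε]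
        calc Real.sqrt (‖X u‖ ^ 2 + ε) ≤ Real.sqrt ((‖X u‖ + Real.sqrt ε) ^ 2) :=
              Real.sqrt_le_sqrt this
          _ = ‖X u‖ + Real.sqrt ε := Real.sqrt_sq (by positivity)
      rw [abs_le]; constructor <;> linarith
    have hcs := hclose s
    have hct := hclose t
    have : |‖X s‖ - ‖X t‖| ≤ |‖X s‖ - g s| + |g s - g t| + |g t - ‖X t‖| := by
      have := abs_sub_le (‖X s‖) (g s) (‖X t‖)
      have := abs_sub_le (g s) (g t) (‖X t‖)
      calc |‖X s‖ - ‖X t‖| ≤ |‖X s‖ - g s| + |g s - ‖X t‖| := abs_sub_le _ _ _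
        _ ≤ |‖X s‖ - g s| + (|g s - g t| + |g t - ‖X t‖|) := by
            linarith [abs_sub_le (g s) (g t) (‖X t‖)]
        _ = _ := by ring
    have hgt : |g t - ‖X t‖| = |‖X t‖ - g t| := abs_sub_comm _ _
    linarith [hlip, hcs, hct, hgt ▸ hct]
  -- take ε → 0
  refine le_of_forall_pos_le_add ?_
  intro δ hδ
  have h := key ((δ / 2) ^ 2) (by positivity)
  have : Real.sqrt ((δ / 2) ^ 2) = δ / 2 := Real.sqrt_sq (by linarith)
  rw [this] at h
  linarith
end

section
/- Let v : ℝ³ → ℝ³ be twice continuously differentiable with div v = 0 on ℝ³, and let l, r ∈ ℝ³ be constant vectors. Set ṽ(y) := v(y) − l − r × y, ω := curl v, and f(y) := ((v(y) − l − r × y)·∇)v(y) + r × v(y). Then curl f = (ṽ·∇)ω − (ω·∇)ṽ at every point of ℝ³. -/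
/-- The partial derivative `∂ᵢ v_j` of a vector field on `ℝ³`. -/
noncomputable def pderiv3 (v : (Fin 3 → ℝ) → Fin 3 → ℝ) (i j : Fin 3) (y : Fin 3 → ℝ) : ℝ :=
  fderiv ℝ v y (Pi.single i 1) j

/-- The curl of a vector field on `ℝ³` (indices `0,1,2` standing for `1,2,3`). -/
noncomputable def curl3 (v : (Fin 3 → ℝ) → Fin 3 → ℝ) (y : Fin 3 → ℝ) : Fin 3 → ℝ :=
  ![pderiv3 v 1 2 y - pderiv3 v 2 1 y,
    pderiv3 v 2 0 y - pderiv3 v 0 2 y,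
    pderiv3 v 0 1 y - pderiv3 v 1 0 y]

/-- The divergence of a vector field on `ℝ³`. -/
noncomputable def div3 (v : (Fin 3 → ℝ) → Fin 3 → ℝ) (y : Fin 3 → ℝ) : ℝ :=
  pderiv3 v 0 0 y + pderiv3 v 1 1 y + pderiv3 v 2 2 y

theorem clm_expand3 {M : Type*} [NormedAddCommGroup M] [NormedSpace ℝ M]
    (T : (Fin 3 → ℝ) →L[ℝ] M) (u : Fin 3 → ℝ) :
    T u = u 0 • T (Pi.single 0 1) + u 1 • T (Pi.single 1 1) + u 2 • T (Pi.single 2 1) := by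
  have hu : u = u 0 • (Pi.single 0 1 : Fin 3 → ℝ) + u 1 • (Pi.single 1 1 : Fin 3 → ℝ)
      + u 2 • (Pi.single 2 1 : Fin 3 → ℝ) := by
    funext i; fin_cases i <;> simp [Pi.single_apply]
  conv_lhs => rw [hu]
  simp

set_option maxHeartbeats 2000000 in
/-- For a divergence-free `C²` vector field `v` on `ℝ³` and constant vectors `l, r`,
with `ṽ(y) := v(y) − l − r × y`, `ω := curl v`, and
`f(y) := ((v(y) − l − r × y)·∇)v(y) + r × v(y)`, one has
`curl f = (ṽ·∇)ω − (ω·∇)ṽ`. -/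
theorem curl_convective_term_rigid
    (v : (Fin 3 → ℝ) → Fin 3 → ℝ) (hv : ContDiff ℝ 2 v)
    (hdiv : ∀ y : Fin 3 → ℝ, div3 v y = 0) (l r : Fin 3 → ℝ) :
    ∀ y : Fin 3 → ℝ,
      curl3 (fun z => fderiv ℝ v z (v z - l - crossProduct r z) + crossProduct r (v z)) y
        = fderiv ℝ (curl3 v) y (v y - l - crossProduct r y)
            - fderiv ℝ (fun z => v z - l - crossProduct r z) y (curl3 v y) := by
  intro y
  have hvd : Differentiable ℝ v := hv.differentiable (by norm_num)
  have hF1 : ContDiff ℝ 1 (fderiv ℝ v) := hv.fderiv_right (by norm_num)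
  set F := fderiv ℝ v with hFdef
  set B := fderiv ℝ F y with hBdef
  have hFd : HasFDerivAt F B y := ((hF1.differentiable one_ne_zero) y).hasFDerivAt
  set Rm : (Fin 3 → ℝ) →L[ℝ] (Fin 3 → ℝ) := LinearMap.toContinuousLinearMap (crossProduct r)
    with hRmdef
  -- derivative of w
  have hwd : HasFDerivAt (fun z => v z - l - crossProduct r z) (F y - Rm) y :=
    (((hvd y).hasFDerivAt).sub_const l).sub Rm.hasFDerivAt
  -- derivative of f
  have hfd : HasFDerivAt
      (fun z => F z (v z - l - crossProduct r z) + crossProduct r (v z))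
      (((F y).comp (F y - Rm) + B.flip (v y - l - crossProduct r y)) + Rm.comp (F y)) y :=
    (hFd.clm_apply hwd).add (Rm.hasFDerivAt.comp y (hvd y).hasFDerivAt)
  -- derivative of z ↦ F z s and its components
  have hFs : ∀ s : Fin 3 → ℝ, HasFDerivAt (fun z => F z s) (B.flip s) y := by
    intro s
    have h := hFd.clm_apply (hasFDerivAt_const s y)
    simpa using h
  have hFsj : ∀ (s : Fin 3 → ℝ) (b : Fin 3), HasFDerivAt (fun z => F z s b)
      ((ContinuousLinearMap.proj b).comp (B.flip s)) y := by
    intro s b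
    exact ((ContinuousLinearMap.proj (R := ℝ) (φ := fun _ : Fin 3 => ℝ) b).hasFDerivAt).comp y
      (hFs s)
  -- derivative of curl3 v
  set C : (Fin 3 → ℝ) →L[ℝ] (Fin 3 → ℝ) := ContinuousLinearMap.pi
    ![(ContinuousLinearMap.proj 2).comp (B.flip (Pi.single 1 1))
        - (ContinuousLinearMap.proj 1).comp (B.flip (Pi.single 2 1)),
      (ContinuousLinearMap.proj 0).comp (B.flip (Pi.single 2 1))
        - (ContinuousLinearMap.proj 2).comp (B.flip (Pi.single 0 1)),
      (ContinuousLinearMap.proj 1).comp (B.flip (Pi.single 0 1))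
        - (ContinuousLinearMap.proj 0).comp (B.flip (Pi.single 1 1))] with hCdef
  have hcurld : HasFDerivAt (curl3 v) C y := by
    apply hasFDerivAt_pi''
    intro i
    fin_cases i
    · show HasFDerivAt (fun z => F z (Pi.single 1 1) 2 - F z (Pi.single 2 1) 1) _ y
      simp only [hCdef, ContinuousLinearMap.proj_pi, Matrix.cons_val_zero]
      exact (hFsj _ 2).sub (hFsj _ 1)
    · show HasFDerivAt (fun z => F z (Pi.single 2 1) 0 - F z (Pi.single 0 1) 2) _ y
      simp only [hCdef, ContinuousLinearMap.proj_pi, Matrix.cons_val_one, Matrix.head_cons]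
      exact (hFsj _ 0).sub (hFsj _ 2)
    · show HasFDerivAt (fun z => F z (Pi.single 0 1) 1 - F z (Pi.single 1 1) 0) _ y
      simp only [hCdef, ContinuousLinearMap.proj_pi, Matrix.cons_val_two, Matrix.tail_cons,
        Matrix.head_cons]
      exact (hFsj _ 1).sub (hFsj _ 0)
  -- atoms
  obtain ⟨A, hA⟩ : ∃ A : Fin 3 → Fin 3 → ℝ, ∀ i j, F y (Pi.single i 1) j = A i j :=
    ⟨_, fun _ _ => rfl⟩
  obtain ⟨S, hS⟩ : ∃ S : Fin 3 → Fin 3 → Fin 3 → ℝ,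
      ∀ k i j, B (Pi.single k 1) (Pi.single i 1) j = S k i j := ⟨_, fun _ _ _ => rfl⟩
  have hFy : ∀ (u : Fin 3 → ℝ) (j : Fin 3),
      F y u j = u 0 * A 0 j + u 1 * A 1 j + u 2 * A 2 j := by
    intro u j
    have h := congrFun (clm_expand3 (F y) u) j
    simpa [hA] using h
  have hB1 : ∀ (k : Fin 3) (s : Fin 3 → ℝ) (j : Fin 3),
      B (Pi.single k 1) s j = s 0 * S k 0 j + s 1 * S k 1 j + s 2 * S k 2 j := by
    intro k s j
    have h := congrFun (clm_expand3 (B (Pi.single k 1)) s) j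
    simpa [hS] using h
  have hB1' : ∀ (u : Fin 3 → ℝ) (i j : Fin 3),
      B u (Pi.single i 1) j = u 0 * S 0 i j + u 1 * S 1 i j + u 2 * S 2 i j := by
    intro u i j
    rw [clm_expand3 B u]
    simp [hS]
  have hRmap : ∀ u : Fin 3 → ℝ,
      Rm u = ![r 1 * u 2 - r 2 * u 1, r 2 * u 0 - r 0 * u 2, r 0 * u 1 - r 1 * u 0] := by
    intro u
    exact cross_apply r u
  -- symmetry of the second derivative
  have hsym : ∀ k i j : Fin 3, S k i j = S i k j := by
    intro k i j
    have h := ((hv.contDiffAt (x := y)).isSymmSndFDerivAt (by simp [minSmoothness_of_isRCLikeNormedField])) (Pi.single k 1) (Pi.single i 1)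
    rw [← hS k i j, ← hS i k j]
    exact congrFun h j
  -- divergence-free
  have htrA : A 0 0 + A 1 1 + A 2 2 = 0 := by
    have h := hdiv y
    simp only [div3, pderiv3, ← hFdef, hA] at h
    exact h
  -- assemble
  rw [hcurld.fderiv, hwd.fderiv]
  simp only [curl3, pderiv3, ← hFdef, hfd.fderiv]
  funext j
  fin_cases j
  ·
    simp [hCdef, Matrix.cons_val_zero, Matrix.cons_val_one, Matrix.head_cons,
      Matrix.cons_val_two, Matrix.tail_cons, Matrix.vecHead, Matrix.vecTail, Pi.sub_apply,
      ContinuousLinearMap.add_apply, ContinuousLinearMap.sub_apply,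
      ContinuousLinearMap.comp_apply, ContinuousLinearMap.flip_apply,
      ContinuousLinearMap.proj_apply, ContinuousLinearMap.pi_apply,
      ContinuousLinearMap.coe_sub', hRmap, hB1', hB1, hFy, hA,
      cross_apply, Pi.single_apply]
    linear_combination (A 1 2 - A 2 1) * htrA
      + (v y 0 - l 0 - (r 1 * y 2 - r 2 * y 1)) * (hsym 1 0 2) - (v y 0 - l 0 - (r 1 * y 2 - r 2 * y 1)) * (hsym 2 0 1)
      + (v y 1 - l 1 - (r 2 * y 0 - r 0 * y 2)) * (hsym 1 1 2) - (v y 1 - l 1 - (r 2 * y 0 - r 0 * y 2)) * (hsym 2 1 1)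
      + (v y 2 - l 2 - (r 0 * y 1 - r 1 * y 0)) * (hsym 1 2 2) - (v y 2 - l 2 - (r 0 * y 1 - r 1 * y 0)) * (hsym 2 2 1)
  ·
    simp [hCdef, Matrix.cons_val_zero, Matrix.cons_val_one, Matrix.head_cons,
      Matrix.cons_val_two, Matrix.tail_cons, Matrix.vecHead, Matrix.vecTail, Pi.sub_apply,
      ContinuousLinearMap.add_apply, ContinuousLinearMap.sub_apply,
      ContinuousLinearMap.comp_apply, ContinuousLinearMap.flip_apply,
      ContinuousLinearMap.proj_apply, ContinuousLinearMap.pi_apply,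
      ContinuousLinearMap.coe_sub', hRmap, hB1', hB1, hFy, hA,
      cross_apply, Pi.single_apply]
    linear_combination (A 2 0 - A 0 2) * htrA
      + (v y 0 - l 0 - (r 1 * y 2 - r 2 * y 1)) * (hsym 2 0 0) - (v y 0 - l 0 - (r 1 * y 2 - r 2 * y 1)) * (hsym 0 0 2)
      + (v y 1 - l 1 - (r 2 * y 0 - r 0 * y 2)) * (hsym 2 1 0) - (v y 1 - l 1 - (r 2 * y 0 - r 0 * y 2)) * (hsym 0 1 2)
      + (v y 2 - l 2 - (r 0 * y 1 - r 1 * y 0)) * (hsym 2 2 0) - (v y 2 - l 2 - (r 0 * y 1 - r 1 * y 0)) * (hsym 0 2 2)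
  ·
    simp [hCdef, Matrix.cons_val_zero, Matrix.cons_val_one, Matrix.head_cons,
      Matrix.cons_val_two, Matrix.tail_cons, Matrix.vecHead, Matrix.vecTail, Pi.sub_apply,
      ContinuousLinearMap.add_apply, ContinuousLinearMap.sub_apply,
      ContinuousLinearMap.comp_apply, ContinuousLinearMap.flip_apply,
      ContinuousLinearMap.proj_apply, ContinuousLinearMap.pi_apply,
      ContinuousLinearMap.coe_sub', hRmap, hB1', hB1, hFy, hA,
      cross_apply, Pi.single_apply]
    linear_combination (A 0 1 - A 1 0) * htrA
      + (v y 0 - l 0 - (r 1 * y 2 - r 2 * y 1)) * (hsym 0 0 1) - (v y 0 - l 0 - (r 1 * y 2 - r 2 * y 1)) * (hsym 1 0 0)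
      + (v y 1 - l 1 - (r 2 * y 0 - r 0 * y 2)) * (hsym 0 1 1) - (v y 1 - l 1 - (r 2 * y 0 - r 0 * y 2)) * (hsym 1 1 0)
      + (v y 2 - l 2 - (r 0 * y 1 - r 1 * y 0)) * (hsym 0 2 1) - (v y 2 - l 2 - (r 0 * y 1 - r 1 * y 0)) * (hsym 1 2 0)
end

section
/- Let ṽ : ℝ × ℝ³ → ℝ³ be continuously differentiable. Let X : ℝ × ℝ × ℝ³ → ℝ³, written X(s; t, y), be continuously differentiable and satisfy: (i) ∂X/∂s(s; t, y) = ṽ(s, X(s; t, y)) and X(t; t, y) = y for all s, t, y; (ii) the flow property X(s; τ, X(τ; t, y)) = X(s; t, y) for all s, τ, t, y. Let G(s; t, y) := ∂X/∂y(s; t, y) be the Jacobian of X with respect to y, assume G(s; t, y) is invertible for all (s, t, y), that (t, y) ↦ G(0; t, y) is continuously differentiable, and that the variational equation ∂G/∂s(s; t, y) = D_xṽ(s, X(s; t, y))·G(s; t, y) holds. Let ω₀ : ℝ³ → ℝ³ be continuously differentiable and define ω(t, y) := G(0; t, y)⁻¹ · ω₀(X(0; t, y)). Then ω is differentiable and satisfies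 the transport equation ∂ω/∂t(t, y) + D_yω(t, y)[ṽ(t, y)] − D_xṽ(t, y)[ω(t, y)] = 0 for all (t, y). -/
/-- The Jacobian matrix of a map `ℝ³ → ℝ³` at a point. -/
noncomputable def jac3 (f : (Fin 3 → ℝ) → Fin 3 → ℝ) (x : Fin 3 → ℝ) :
    Matrix (Fin 3) (Fin 3) ℝ :=
  Matrix.of fun i j => fderiv ℝ f x (Pi.single j 1) i

lemma single_eq_ite (j : Fin 3) : (Pi.single j 1 : Fin 3 → ℝ) = fun k => if j = k then 1 else 0 := by
  funext k
  rw [Pi.single_apply]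
  simp [eq_comm]

lemma jac3_mulVec (f : (Fin 3 → ℝ) → Fin 3 → ℝ) (x v : Fin 3 → ℝ) :
    (jac3 f x).mulVec v = fderiv ℝ f x v := by
  funext i
  have h := LinearMap.pi_apply_eq_sum_univ ((fderiv ℝ f x : (Fin 3 → ℝ) →L[ℝ] (Fin 3 → ℝ)) :
      (Fin 3 → ℝ) →ₗ[ℝ] (Fin 3 → ℝ)) v
  simp only [ContinuousLinearMap.coe_coe] at h
  rw [h]
  simp only [Matrix.mulVec, dotProduct, jac3, Matrix.of_apply, Finset.sum_apply,
    Pi.smul_apply, smul_eq_mul]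
  refine Finset.sum_congr rfl fun j _ => ?_
  rw [← single_eq_ite, mul_comm]

lemma jac3_comp {f g : (Fin 3 → ℝ) → Fin 3 → ℝ} {x : Fin 3 → ℝ}
    (hf : DifferentiableAt ℝ f x) (hg : DifferentiableAt ℝ g (f x)) :
    jac3 (fun y => g (f y)) x = jac3 g (f x) * jac3 f x := by
  ext i j
  have hcomp : fderiv ℝ (g ∘ f) x = (fderiv ℝ g (f x)).comp (fderiv ℝ f x) :=
    fderiv_comp x hg hf
  have : (fun y => g (f y)) = g ∘ f := rfl
  rw [Matrix.mul_apply]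
  simp only [jac3, Matrix.of_apply, this, hcomp, ContinuousLinearMap.coe_comp',
    Function.comp_apply]
  rw [← jac3_mulVec g (f x) (fderiv ℝ f x (Pi.single j 1))]
  simp [Matrix.mulVec, dotProduct, jac3]

lemma jac3_id (x : Fin 3 → ℝ) : jac3 (fun y => y) x = 1 := by
  ext i j
  simp [jac3, fderiv_id', Matrix.one_apply, Pi.single_apply, eq_comm]

lemma diff_det3 {E : Type*} [NormedAddCommGroup E] [NormedSpace ℝ E]
    {M : E → Matrix (Fin 3) (Fin 3) ℝ} (h : ∀ i j, Differentiable ℝ fun p => M p i j) :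
    Differentiable ℝ fun p => (M p).det := by
  simp only [Matrix.det_fin_three]
  exact ((((((h 0 0).mul (h 1 1)).mul (h 2 2)).sub
    (((h 0 0).mul (h 1 2)).mul (h 2 1))).sub
    (((h 0 1).mul (h 1 0)).mul (h 2 2))).add
    (((h 0 1).mul (h 1 2)).mul (h 2 0))).add
    (((h 0 2).mul (h 1 0)).mul (h 2 1)) |>.sub
    (((h 0 2).mul (h 1 1)).mul (h 2 0))

lemma diff_adj3 {E : Type*} [NormedAddCommGroup E] [NormedSpace ℝ E]
    {M : E → Matrix (Fin 3) (Fin 3) ℝ} (h : ∀ i j, Differentiable ℝ fun p => M p i j)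
    (i j : Fin 3) : Differentiable ℝ fun p => (M p).adjugate i j := by
  simp only [Matrix.adjugate_apply]
  apply diff_det3
  intro k l
  simp only [Matrix.updateRow_apply]
  split_ifs
  · exact differentiable_const _
  · exact h k l

lemma diff_inv3 {E : Type*} [NormedAddCommGroup E] [NormedSpace ℝ E]
    {M : E → Matrix (Fin 3) (Fin 3) ℝ} (h : ∀ i j, Differentiable ℝ fun p => M p i j)
    (hU : ∀ p, IsUnit (M p)) (i j : Fin 3) :
    Differentiable ℝ fun p => (M p)⁻¹ i j := by
  have hd : ∀ p, (M p).det ≠ 0 := fun p =>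
    ((Matrix.isUnit_iff_isUnit_det _).1 (hU p)).ne_zero
  simp only [Matrix.inv_def, Ring.inverse_eq_inv, Matrix.smul_apply, smul_eq_mul]
  exact ((diff_det3 h).inv hd).mul (diff_adj3 h i j)

/-- **Transport of the vorticity along the flow.** -/
theorem vorticity_transport
    (vt : ℝ → (Fin 3 → ℝ) → Fin 3 → ℝ)
    (hvt : ContDiff ℝ 1 fun p : ℝ × (Fin 3 → ℝ) => vt p.1 p.2)
    (X : ℝ → ℝ → (Fin 3 → ℝ) → Fin 3 → ℝ)
    (hX : ContDiff ℝ 1 fun p : ℝ × ℝ × (Fin 3 → ℝ) => X p.1 p.2.1 p.2.2)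
    (hXode : ∀ s t y, HasDerivAt (fun u => X u t y) (vt s (X s t y)) s)
    (hXinit : ∀ t y, X t t y = y)
    (hXflow : ∀ s τ t y, X s τ (X τ t y) = X s t y)
    (G : ℝ → ℝ → (Fin 3 → ℝ) → Matrix (Fin 3) (Fin 3) ℝ)
    (hGdef : ∀ s t y, G s t y = jac3 (X s t) y)
    (hGinv : ∀ s t y, IsUnit (G s t y))
    (hGC1 : ∀ i j, ContDiff ℝ 1 fun p : ℝ × (Fin 3 → ℝ) => G 0 p.1 p.2 i j)
    (hGvar : ∀ s t y i j,
      HasDerivAt (fun u => G u t y i j) ((jac3 (vt s) (X s t y) * G s t y) i j) s)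
    (ω₀ : (Fin 3 → ℝ) → Fin 3 → ℝ) (hω₀ : ContDiff ℝ 1 ω₀)
    (ω : ℝ → (Fin 3 → ℝ) → Fin 3 → ℝ)
    (hωdef : ∀ t y, ω t y = (G 0 t y)⁻¹.mulVec (ω₀ (X 0 t y))) :
    Differentiable ℝ (fun p : ℝ × (Fin 3 → ℝ) => ω p.1 p.2) ∧
    ∀ t y, deriv (fun u => ω u y) t + fderiv ℝ (ω t) y (vt t y)
        - fderiv ℝ (vt t) y (ω t y) = 0 := by
  have hXd : Differentiable ℝ fun p : ℝ × ℝ × (Fin 3 → ℝ) => X p.1 p.2.1 p.2.2 :=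
    hX.differentiable one_ne_zero
  have hvtd : Differentiable ℝ fun p : ℝ × (Fin 3 → ℝ) => vt p.1 p.2 :=
    hvt.differentiable one_ne_zero
  have hXst : ∀ s t, Differentiable ℝ (X s t) := by
    intro s t
    have : X s t = (fun p : ℝ × ℝ × (Fin 3 → ℝ) => X p.1 p.2.1 p.2.2) ∘
        (fun y => (s, t, y)) := rfl
    rw [this]
    exact hXd.comp (by fun_prop)
  have hvtt : ∀ t, Differentiable ℝ (vt t) := by
    intro t
    have : vt t = (fun p : ℝ × (Fin 3 → ℝ) => vt p.1 p.2) ∘ (fun y => (t, y)) := rfl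
    rw [this]
    exact hvtd.comp (by fun_prop)
  -- joint differentiability of ω
  have hGe : ∀ i j, Differentiable ℝ fun p : ℝ × (Fin 3 → ℝ) => G 0 p.1 p.2 i j :=
    fun i j => (hGC1 i j).differentiable one_ne_zero
  have hX0 : Differentiable ℝ fun p : ℝ × (Fin 3 → ℝ) => X 0 p.1 p.2 := by
    have : (fun p : ℝ × (Fin 3 → ℝ) => X 0 p.1 p.2) =
        (fun q : ℝ × ℝ × (Fin 3 → ℝ) => X q.1 q.2.1 q.2.2) ∘ (fun p => (0, p.1, p.2)) := rfl
    rw [this]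
    exact hXd.comp (by fun_prop)
  have hΩd : Differentiable ℝ (fun p : ℝ × (Fin 3 → ℝ) => ω p.1 p.2) := by
    have heq : (fun p : ℝ × (Fin 3 → ℝ) => ω p.1 p.2)
        = fun p => ((G 0 p.1 p.2)⁻¹).mulVec (ω₀ (X 0 p.1 p.2)) := by
      funext p
      exact hωdef p.1 p.2
    rw [heq, differentiable_pi]
    intro i
    simp only [Matrix.mulVec, dotProduct]
    apply Differentiable.fun_sum
    intro j _
    refine (diff_inv3 (fun i j => hGe i j) (fun p => hGinv 0 p.1 p.2) i j).mul ?_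
    exact (differentiable_pi.1 ((hω₀.differentiable one_ne_zero).comp hX0)) j
  -- the key transport identity along the flow
  have hstar : ∀ s t y, ω s (X s t y) = (G s t y).mulVec (ω t y) := by
    intro s t y
    have hflowfun : X 0 t = fun w => X 0 s (X s t w) := by
      funext w
      rw [hXflow]
    have hchain : G 0 t y = G 0 s (X s t y) * G s t y := by
      rw [hGdef 0 t y, hflowfun, hGdef 0 s, hGdef s t]
      exact jac3_comp ((hXst s t) y) ((hXst 0 s) (X s t y))
    have hU1 : IsUnit (G s t y).det := (Matrix.isUnit_iff_isUnit_det _).1 (hGinv s t y)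
    have hinv : (G 0 s (X s t y))⁻¹ = G s t y * (G 0 t y)⁻¹ := by
      rw [hchain, Matrix.mul_inv_rev, ← Matrix.mul_assoc,
        Matrix.mul_nonsing_inv _ hU1, Matrix.one_mul]
    rw [hωdef s (X s t y), hωdef t y, hXflow, hinv, ← Matrix.mulVec_mulVec]
  -- G t t y = 1
  have hG1 : ∀ t y, G t t y = 1 := by
    intro t y
    have : X t t = fun w => w := funext (hXinit t)
    rw [hGdef, this, jac3_id]
  -- key derivative identity
  have key : ∀ t y, fderiv ℝ (fun p : ℝ × (Fin 3 → ℝ) => ω p.1 p.2) (t, y) (1, vt t y)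
      = fderiv ℝ (vt t) y (ω t y) := by
    intro t y
    have hγ : HasDerivAt (fun s => ((s, X s t y) : ℝ × (Fin 3 → ℝ))) (1, vt t y) t := by
      have h2 := hXode t t y
      rw [hXinit] at h2
      exact HasDerivAt.prodMk (hasDerivAt_id t) h2
    have hΩf : HasFDerivAt (fun p : ℝ × (Fin 3 → ℝ) => ω p.1 p.2)
        (fderiv ℝ (fun p : ℝ × (Fin 3 → ℝ) => ω p.1 p.2) (t, y))
        ((fun s => ((s, X s t y) : ℝ × (Fin 3 → ℝ))) t) := by
      simp only [hXinit]
      exact (hΩd (t, y)).hasFDerivAt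
    have hL : HasDerivAt (fun s => ω s (X s t y))
        (fderiv ℝ (fun p : ℝ × (Fin 3 → ℝ) => ω p.1 p.2) (t, y) (1, vt t y)) t := by
      have := hΩf.comp_hasDerivAt t hγ
      exact this
    have hR : HasDerivAt (fun s => ω s (X s t y)) (fderiv ℝ (vt t) y (ω t y)) t := by
      have hfun : (fun s => ω s (X s t y)) = fun s => (G s t y).mulVec (ω t y) :=
        funext fun s => hstar s t y
      rw [hfun]
      have hder : fderiv ℝ (vt t) y (ω t y) = (jac3 (vt t) y).mulVec (ω t y) :=
        (jac3_mulVec (vt t) y (ω t y)).symm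
      rw [hder, hasDerivAt_pi]
      intro i
      have hsum : ∀ s, (G s t y).mulVec (ω t y) i = ∑ j, G s t y i j * ω t y j := by
        intro s
        simp [Matrix.mulVec, dotProduct]
      simp only [hsum]
      have hmv : (jac3 (vt t) y).mulVec (ω t y) i = ∑ j, (jac3 (vt t) y * G t t y) i j * ω t y j := by
        rw [hG1, Matrix.mul_one]
        simp [Matrix.mulVec, dotProduct]
      rw [hmv]
      apply HasDerivAt.fun_sum
      intro j _
      have := (hGvar t t y i j).mul_const (ω t y j)
      rw [hXinit] at this
      exact this
    exact hL.unique hR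
  refine ⟨hΩd, fun t y => ?_⟩
  have h1 : deriv (fun u => ω u y) t
      = fderiv ℝ (fun p : ℝ × (Fin 3 → ℝ) => ω p.1 p.2) (t, y) (1, 0) := by
    have hγ : HasDerivAt (fun u : ℝ => ((u, y) : ℝ × (Fin 3 → ℝ))) (1, 0) t :=
      HasDerivAt.prodMk (hasDerivAt_id t) (hasDerivAt_const t y)
    have hc := (hΩd (t, y)).hasFDerivAt.comp_hasDerivAt t hγ
    have hc' : HasDerivAt (fun u => ω u y)
        (fderiv ℝ (fun p : ℝ × (Fin 3 → ℝ) => ω p.1 p.2) (t, y) (1, 0)) t := by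
      exact hc
    exact hc'.deriv
  have h2 : fderiv ℝ (ω t) y (vt t y)
      = fderiv ℝ (fun p : ℝ × (Fin 3 → ℝ) => ω p.1 p.2) (t, y) (0, vt t y) := by
    have hγ : HasFDerivAt (fun x : Fin 3 → ℝ => ((t, x) : ℝ × (Fin 3 → ℝ)))
        ((0 : (Fin 3 → ℝ) →L[ℝ] ℝ).prod (ContinuousLinearMap.id ℝ (Fin 3 → ℝ))) y :=
      HasFDerivAt.prodMk (hasFDerivAt_const t y) (hasFDerivAt_id y)
    have hc : HasFDerivAt (ω t)
        ((fderiv ℝ (fun p : ℝ × (Fin 3 → ℝ) => ω p.1 p.2) (t, y)).comp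
          ((0 : (Fin 3 → ℝ) →L[ℝ] ℝ).prod (ContinuousLinearMap.id ℝ (Fin 3 → ℝ)))) y :=
      (hΩd (t, y)).hasFDerivAt.comp y hγ
    rw [hc.fderiv]
    simp
  have h3 : ((1 : ℝ), vt t y) = ((1:ℝ), (0 : Fin 3 → ℝ)) + ((0:ℝ), vt t y) := by
    simp
  rw [h1, h2, ← key t y, h3, map_add]
  abel
end
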